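/- There exists a unique symmetric bilinear form (·,·) on the free superalgebra 'f with values in Q(q)[π]/(π²-1) such that (1,1)=1, (θ_i, θ_j) = δ_{ij}(1 - π_i q_i^{-2})^{-1}, (x, y'y'') = (r(x), y'⊗y''), and (xx', y'') = (x⊗x', r(y'')) for all x, x', y', y'' ∈ 'f. -/

import Mathlib

/- The ring `Aq = ℚ(q)[π]/(π²-1) ≅ ℚ(q) × ℚ(q)` (via π ↦ (1, -1), an isomorphism
since 2 is invertible).  Division/inversion is componentwise (the total fraction ring). -/
noncomputable section

abbrev Aq : Type := RatFunc ℚ × RatFunc ℚ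

/-- the element `q` -/
def qA : Aq := (RatFunc.X, RatFunc.X)

/-- the element `π`, satisfying `π² = 1` -/
def pA : Aq := (1, -1)

/-- The `(q,π)`-binomial coefficient
`[[a;t]] = (∏_{s=0}^{t-1} ((πq)^{a-s} - q^{s-a})) / (∏_{s=1}^{t} ((πq)^s - q^{-s}))`. -/
def qbinom (a : ℤ) (t : ℕ) : Aq :=
  (∏ s ∈ Finset.range t, ((pA * qA) ^ (a - (s : ℤ)) - qA ^ ((s : ℤ) - a))) /
  (∏ s ∈ Finset.range t, ((pA * qA) ^ ((s : ℤ) + 1) - qA ^ (-((s : ℤ) + 1))))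


/-- A super Cartan datum: `I = I₀ ⊔ I₁` (parity `p : I → {0,1}`), symmetric form `Bf`,
with `Bf i i = 2 d i > 0`, `⟨i,j'⟩ = aij i j = 2(i·j)/(i·i) ∈ -ℕ` for `i ≠ j`,
even for odd `i`, and `I₁ ≠ ∅`. -/
structure SCD (I : Type) (Bf : I → I → ℤ) (p d : I → ℕ) (aij : I → I → ℤ) : Prop where
  symm : ∀ i j, Bf i j = Bf j i
  diag : ∀ i, Bf i i = 2 * (d i : ℤ)
  dpos : ∀ i, 0 < d i
  div : ∀ i j, (d i : ℤ) * aij i j = Bf i j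
  offdiag : ∀ i j, i ≠ j → aij i j ≤ 0
  par_le : ∀ i, p i ≤ 1
  odd_even : ∀ i j, p i = 1 → Even (aij i j)
  odd_nonempty : ∃ i, p i = 1

/-- the pairing `|w|·|w'|` of the weights of two words -/
def wtB {I : Type} (Bf : I → I → ℤ) (w w' : FreeMonoid I) : ℤ :=
  ((FreeMonoid.toList w).map fun i =>
    ((FreeMonoid.toList w').map fun j => Bf i j).sum).sum

/-- the parity `p(w)` of a word -/
def par {I : Type} (p : I → ℕ) (w : FreeMonoid I) : ℕ :=
  ((FreeMonoid.toList w).map p).sum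

/-- the twisting factor `q^{|w|·|w'|} π^{p(w)p(w')}` -/
def tw {I : Type} (Bf : I → I → ℤ) (p : I → ℕ) (w w' : FreeMonoid I) : Aq :=
  qA ^ wtB Bf w w' * pA ^ (par p w * par p w')

/-- the free associative superalgebra `'f` on generators `θ_i`, realized as the monoid
algebra of the free monoid on `I` (so the words are the standard homogeneous basis) -/
abbrev FF (I : Type) : Type := MonoidAlgebra Aq (FreeMonoid I)

/-- the basis element of `'f` corresponding to a word `w` -/
def ofW {I : Type} (w : FreeMonoid I) : FF I := MonoidAlgebra.of Aq (FreeMonoid I) w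

/-- the generator `θ_i` -/
def th {I : Type} (i : I) : FF I := ofW (FreeMonoid.of i)

/-- `q_i = q^{i·i/2}` -/
def qi {I : Type} (d : I → ℕ) (i : I) : Aq := qA ^ d i

/-- `π_i = π^{p(i)}` -/
def pi' {I : Type} (p : I → ℕ) (i : I) : Aq := pA ^ p i

/-- `[m]_i = ((π_i q_i)^m - q_i^{-m})/(π_i q_i - q_i^{-1})` -/
def qinti {I : Type} (p d : I → ℕ) (i : I) (m : ℕ) : Aq :=
  ((pi' p i * qi d i) ^ m - qi d i ^ (-(m : ℤ))) / (pi' p i * qi d i - (qi d i)⁻¹)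

/-- `[m]_i! = ∏_{s=1}^m [s]_i` -/
def qfacti {I : Type} (p d : I → ℕ) (i : I) (m : ℕ) : Aq :=
  ∏ s ∈ Finset.range m, qinti p d i (s + 1)

/-- the divided power `θ_i^{(n)} = θ_i^n/[n]_i!` -/
def thpow {I : Type} (p d : I → ℕ) (i : I) (n : ℕ) : FF I :=
  (qfacti p d i n)⁻¹ • th i ^ n

/-- The defining properties of the bilinear form `(·,·)` on `'f`:
`(1,1)=1`, `(θ_i,θ_j) = δ_{ij}(1-π_i q_i^{-2})^{-1}`, `(x, y'y'') = (r(x), y'⊗y'')` and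
`(xx', y'') = (x⊗x', r(y''))`, where the form on the twisted tensor square `T2` is
`(x₁⊗x₂, x₁'⊗x₂') = (x₁,x₁')(x₂,x₂')` (expressed by expanding along the basis `b2`). -/
structure FormProps (I : Type) [DecidableEq I] (Bf : I → I → ℤ) (p d : I → ℕ)
    (T2 : Type) [Ring T2] [Algebra Aq T2]
    (b2 : Module.Basis (FreeMonoid I × FreeMonoid I) Aq T2)
    (r : FF I →ₐ[Aq] T2)
    (B : FF I →ₗ[Aq] FF I →ₗ[Aq] Aq) : Prop where
  one_one : B 1 1 = 1
  gen : ∀ i j, B (th i) (th j) =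
      if i = j then (1 - pi' p i * qi d i ^ (-2 : ℤ))⁻¹ else 0
  mul_right : ∀ x y' y'', B x (y' * y'') =
      (b2.repr (r x)).sum fun pr c => c * B (ofW pr.1) y' * B (ofW pr.2) y''
  mul_left : ∀ x x' y'', B (x * x') y'' =
      (b2.repr (r y'')).sum fun pr c => c * B x (ofW pr.1) * B x' (ofW pr.2)

/-- reversal of a word -/
def revW {I : Type} (w : FreeMonoid I) : FreeMonoid I :=
  FreeMonoid.ofList (FreeMonoid.toList w).reverse

/-- the weight `|w| ∈ ℕ[I]` of a word -/
def wtF {I : Type} (w : FreeMonoid I) : I →₀ ℕ :=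
  ((FreeMonoid.toList w).map fun i => Finsupp.single i 1).sum


section BilinearAux

open FreeMonoid

variable {I : Type} [DecidableEq I]

instance fmDecEq : DecidableEq (FreeMonoid I) := fun a b =>
  decidable_of_iff (FreeMonoid.toList a = FreeMonoid.toList b)
    ⟨fun h => FreeMonoid.toList.injective h, fun h => by rw [h]⟩

lemma fm_toList_of_mul (i : I) (u : FreeMonoid I) :
    FreeMonoid.toList (FreeMonoid.of i * u) = i :: FreeMonoid.toList u := by
  simp [FreeMonoid.toList_mul]

lemma fm_of_ne_one (i : I) : FreeMonoid.of i ≠ 1 := by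
  intro h
  have := congrArg FreeMonoid.toList h
  simp at this

lemma fm_of_mul_ne_one (i : I) (u : FreeMonoid I) : FreeMonoid.of i * u ≠ 1 := by
  intro h
  have := congrArg FreeMonoid.toList h
  rw [fm_toList_of_mul] at this
  simp at this

lemma fm_mul_eq_one {u v : FreeMonoid I} : u * v = 1 ↔ u = 1 ∧ v = 1 := by
  constructor
  · intro h
    have h' : FreeMonoid.toList u ++ FreeMonoid.toList v = [] := by
      simpa [FreeMonoid.toList_mul] using congrArg FreeMonoid.toList h
    rcases List.append_eq_nil_iff.mp h' with ⟨h1, h2⟩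
    exact ⟨FreeMonoid.toList.injective (by simp [h1]),
      FreeMonoid.toList.injective (by simp [h2])⟩
  · rintro ⟨rfl, rfl⟩; simp

lemma fm_of_mul_eq_of_mul {i j : I} {u v : FreeMonoid I} :
    FreeMonoid.of i * u = FreeMonoid.of j * v ↔ i = j ∧ u = v := by
  constructor
  · intro h
    have h' := congrArg FreeMonoid.toList h
    rw [fm_toList_of_mul, fm_toList_of_mul] at h'
    rcases List.cons.injEq .. ▸ h' with ⟨h1, h2⟩
    exact ⟨h1, FreeMonoid.toList.injective h2⟩
  · rintro ⟨rfl, rfl⟩; rfl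

lemma fm_mul_eq_of {u v : FreeMonoid I} {i : I} :
    u * v = FreeMonoid.of i ↔ (u = FreeMonoid.of i ∧ v = 1) ∨ (u = 1 ∧ v = FreeMonoid.of i) := by
  constructor
  · intro h
    have h' : FreeMonoid.toList u ++ FreeMonoid.toList v = [i] := by
      simpa [FreeMonoid.toList_mul] using congrArg FreeMonoid.toList h
    rcases List.append_eq_cons_iff.mp h' with ⟨h1, h2⟩ | ⟨a', h1, h2⟩
    · right
      exact ⟨FreeMonoid.toList.injective (by simp [h1]),
        FreeMonoid.toList.injective (by simp [h2])⟩
    · left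
      rcases List.append_eq_nil_iff.mp h2.symm with ⟨h3, h4⟩
      refine ⟨FreeMonoid.toList.injective ?_, FreeMonoid.toList.injective (by simp [h4])⟩
      simp [h1, h3]
  · rintro (⟨rfl, rfl⟩ | ⟨rfl, rfl⟩) <;> simp

lemma fm_ofList_cons (i : I) (y : List I) :
    FreeMonoid.ofList (i :: y) = FreeMonoid.of i * FreeMonoid.ofList y := by
  apply FreeMonoid.toList.injective
  rw [fm_toList_of_mul]
  simp

/-! ### weights and parities -/

lemma wtF_one : wtF (1 : FreeMonoid I) = 0 := by simp [wtF]

lemma wtF_of (i : I) : wtF (FreeMonoid.of i) = Finsupp.single i 1 := by simp [wtF]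

lemma wtF_mul (u v : FreeMonoid I) : wtF (u * v) = wtF u + wtF v := by
  simp [wtF, FreeMonoid.toList_mul]

lemma par_one (p : I → ℕ) : par p (1 : FreeMonoid I) = 0 := by simp [par]

lemma par_of (p : I → ℕ) (i : I) : par p (FreeMonoid.of i) = p i := by simp [par]

lemma par_mul (p : I → ℕ) (u v : FreeMonoid I) : par p (u * v) = par p u + par p v := by
  simp [par, FreeMonoid.toList_mul]

lemma sum_toList_eq {M : Type} [AddCommMonoid M] (g : I → M) (w : FreeMonoid I) :
    ((FreeMonoid.toList w).map g).sum = (wtF w).sum fun j n => n • g j := by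
  induction w using FreeMonoid.recOn with
  | one => simp [wtF_one]
  | of_mul i w ihw =>
    rw [fm_toList_of_mul, List.map_cons, List.sum_cons, ihw, wtF_mul, wtF_of,
      Finsupp.sum_add_index' (fun a => by simp) (fun a b c => add_smul b c (g a)),
      Finsupp.sum_single_index (by simp)]
    simp

lemma par_eq_of_wtF {p : I → ℕ} {a b : FreeMonoid I} (h : wtF a = wtF b) :
    par p a = par p b := by
  rw [par, par, sum_toList_eq p a, sum_toList_eq p b, h]

lemma wtB_eq_of_wtF {Bf : I → I → ℤ} (v : FreeMonoid I) {a b : FreeMonoid I}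
    (h : wtF a = wtF b) : wtB Bf v a = wtB Bf v b := by
  unfold wtB
  have : (fun i => ((FreeMonoid.toList a).map fun j => Bf i j).sum)
      = fun i => ((FreeMonoid.toList b).map fun j => Bf i j).sum := by
    funext i
    rw [sum_toList_eq (fun j => Bf i j) a, h, ← sum_toList_eq]
  rw [this]

lemma wtB_one_left (Bf : I → I → ℤ) (v : FreeMonoid I) : wtB Bf 1 v = 0 := by simp [wtB]

lemma wtB_one_right (Bf : I → I → ℤ) (v : FreeMonoid I) : wtB Bf v 1 = 0 := by simp [wtB]

lemma wtB_mul_left (Bf : I → I → ℤ) (a b v : FreeMonoid I) :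
    wtB Bf (a * b) v = wtB Bf a v + wtB Bf b v := by
  simp [wtB, FreeMonoid.toList_mul]

lemma wtB_mul_right (Bf : I → I → ℤ) (v a b : FreeMonoid I) :
    wtB Bf v (a * b) = wtB Bf v a + wtB Bf v b := by
  simp only [wtB, FreeMonoid.toList_mul, List.map_append, List.sum_append]
  rw [← List.sum_map_add]

lemma wtB_comm {Bf : I → I → ℤ} (hsymm : ∀ i j, Bf i j = Bf j i) (a b : FreeMonoid I) :
    wtB Bf a b = wtB Bf b a := by
  induction a using FreeMonoid.recOn with
  | one => rw [wtB_one_left, wtB_one_right]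
  | of_mul i w ihw =>
    rw [wtB_mul_left, wtB_mul_right, ihw]
    congr 1
    simp only [wtB, FreeMonoid.toList_of, List.map_cons, List.map_nil, List.sum_cons,
      List.sum_nil]
    rw [List.map_congr_left (fun j _ => (hsymm i j : Bf i j = Bf j i))]
    induction FreeMonoid.toList b with
    | nil => simp
    | cons c l ih => simp_all
    
/-! ### the twist -/

lemma qA_zpow_add (m n : ℤ) : qA ^ (m + n) = qA ^ m * qA ^ n := by
  have h1 : ∀ k : ℤ, qA ^ k = ((RatFunc.X : RatFunc ℚ) ^ k, (RatFunc.X : RatFunc ℚ) ^ k) :=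
    fun k => rfl
  rw [h1, h1, h1, Prod.mk_mul_mk, zpow_add₀ RatFunc.X_ne_zero]

lemma tw_one_left (Bf : I → I → ℤ) (p : I → ℕ) (v : FreeMonoid I) : tw Bf p 1 v = 1 := by
  simp [tw, wtB_one_left, par_one]

lemma tw_one_right (Bf : I → I → ℤ) (p : I → ℕ) (v : FreeMonoid I) : tw Bf p v 1 = 1 := by
  simp [tw, wtB_one_right, par_one]

lemma tw_mul_right (Bf : I → I → ℤ) (p : I → ℕ) (v a b : FreeMonoid I) :
    tw Bf p v (a * b) = tw Bf p v a * tw Bf p v b := by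
  rw [tw, tw, tw, wtB_mul_right, par_mul, qA_zpow_add, Nat.mul_add, pow_add]
  ring

lemma tw_comm {Bf : I → I → ℤ} (hsymm : ∀ i j, Bf i j = Bf j i) (p : I → ℕ)
    (a b : FreeMonoid I) : tw Bf p a b = tw Bf p b a := by
  rw [tw, tw, wtB_comm hsymm, Nat.mul_comm]

lemma tw_congr_right {p : I → ℕ} (Bf : I → I → ℤ) (v : FreeMonoid I) {a a' : FreeMonoid I}
    (h : wtF a = wtF a') (hp : par p a = par p a') : tw Bf p v a = tw Bf p v a' := by
  rw [tw, tw, wtB_eq_of_wtF v h, hp]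

end BilinearAux

section RhoSection
set_option linter.unusedSectionVars false
set_option maxHeartbeats 1000000

variable {I : Type} [DecidableEq I] (Bf : I → I → ℤ) (p : I → ℕ)
variable {T2 : Type} [Ring T2] [Algebra Aq T2]
variable (b2 : Module.Basis (FreeMonoid I × FreeMonoid I) Aq T2)
variable (r : FF I →ₐ[Aq] T2)

lemma ofW_one : ofW (1 : FreeMonoid I) = 1 := map_one (MonoidAlgebra.of Aq (FreeMonoid I))

lemma ofW_mul (u v : FreeMonoid I) : ofW (u * v) = ofW u * ofW v :=
  map_mul (MonoidAlgebra.of Aq (FreeMonoid I)) u v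

/-- coefficients of `r(θ_w)` in the basis of the twisted tensor square -/
def rho (w : FreeMonoid I) : (FreeMonoid I × FreeMonoid I) →₀ Aq := b2.repr (r (ofW w))

lemma rho_one (hone : b2 (1, 1) = 1) : rho b2 r 1 = Finsupp.single (1, 1) 1 := by
  rw [rho, ofW_one, map_one, ← hone, b2.repr_self]

lemma rho_of (hr : ∀ i, r (th i) = b2 (FreeMonoid.of i, 1) + b2 (1, FreeMonoid.of i)) (i : I) : rho b2 r (FreeMonoid.of i)
    = Finsupp.single (FreeMonoid.of i, 1) 1 + Finsupp.single (1, FreeMonoid.of i) 1 := by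
  have : ofW (FreeMonoid.of i) = th i := rfl
  rw [rho, this, hr i, map_add, b2.repr_self, b2.repr_self]

lemma rho_mul (hmul : ∀ w1 w2 w1' w2', b2 (w1, w2) * b2 (w1', w2')
        = tw Bf p w2 w1' • b2 (w1 * w1', w2 * w2')) (u v : FreeMonoid I) :
    rho b2 r (u * v) = (rho b2 r u).sum fun pr a => (rho b2 r v).sum fun pr' b =>
      (a * b * tw Bf p pr.2 pr'.1) • Finsupp.single (pr.1 * pr'.1, pr.2 * pr'.2) (1 : Aq) := by
  have hu : r (ofW u) = (rho b2 r u).sum fun pr a => a • b2 pr := by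
    conv_lhs => rw [show r (ofW u) = Finsupp.linearCombination Aq b2 (b2.repr (r (ofW u))) from
      (b2.linearCombination_repr _).symm]
    rw [Finsupp.linearCombination_apply]; rfl
  have hv : r (ofW v) = (rho b2 r v).sum fun pr a => a • b2 pr := by
    conv_lhs => rw [show r (ofW v) = Finsupp.linearCombination Aq b2 (b2.repr (r (ofW v))) from
      (b2.linearCombination_repr _).symm]
    rw [Finsupp.linearCombination_apply]; rfl
  rw [rho, ofW_mul, map_mul, hu, hv, Finsupp.sum_mul, map_finsuppSum]
  apply Finsupp.sum_congr
  intro pr _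
  rw [Finsupp.mul_sum, map_finsuppSum]
  apply Finsupp.sum_congr
  intro pr' _
  rw [smul_mul_smul_comm, hmul, smul_smul, map_smul, b2.repr_self]

lemma sum_rho_mul (hmul : ∀ w1 w2 w1' w2', b2 (w1, w2) * b2 (w1', w2')
        = tw Bf p w2 w1' • b2 (w1 * w1', w2 * w2')) (u v : FreeMonoid I) (K : FreeMonoid I × FreeMonoid I → Aq) :
    ((rho b2 r (u * v)).sum fun pr cc => cc * K pr)
    = (rho b2 r u).sum fun pr a => (rho b2 r v).sum fun pr' b =>
        a * b * tw Bf p pr.2 pr'.1 * K (pr.1 * pr'.1, pr.2 * pr'.2) := by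
  rw [rho_mul Bf p b2 r hmul]
  rw [Finsupp.sum_sum_index (fun a => zero_mul (K a)) (fun a c1 c2 => add_mul c1 c2 (K a))]
  apply Finsupp.sum_congr
  intro pr _
  rw [Finsupp.sum_sum_index (fun a => zero_mul (K a)) (fun a c1 c2 => add_mul c1 c2 (K a))]
  apply Finsupp.sum_congr
  intro pr' _
  rw [Finsupp.smul_single', mul_one,
    Finsupp.sum_single_index (zero_mul (K (pr.1 * pr'.1, pr.2 * pr'.2)))]

lemma sum_rho_one (hone : b2 (1, 1) = 1) (K : FreeMonoid I × FreeMonoid I → Aq) :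
    ((rho b2 r 1).sum fun pr cc => cc * K pr) = K (1, 1) := by
  rw [rho_one b2 r hone, Finsupp.sum_single_index (zero_mul (K (1,1))), one_mul]

lemma sum_rho_cons (hmul : ∀ w1 w2 w1' w2', b2 (w1, w2) * b2 (w1', w2')
        = tw Bf p w2 w1' • b2 (w1 * w1', w2 * w2'))
    (hr : ∀ i, r (th i) = b2 (FreeMonoid.of i, 1) + b2 (1, FreeMonoid.of i))
    (i : I) (w : FreeMonoid I) (K : FreeMonoid I × FreeMonoid I → Aq) :
    ((rho b2 r (FreeMonoid.of i * w)).sum fun pr cc => cc * K pr)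
    = (rho b2 r w).sum fun pr cc =>
        cc * (K (FreeMonoid.of i * pr.1, pr.2)
          + tw Bf p (FreeMonoid.of i) pr.1 * K (pr.1, FreeMonoid.of i * pr.2)) := by
  rw [sum_rho_mul Bf p b2 r hmul, rho_of b2 r hr]
  rw [Finsupp.sum_add_index' ?_h0 ?_hadd]
  case _h0 =>
    intro pr
    simp
  case _hadd =>
    intro pr a1 a2
    rw [← Finsupp.sum_add]
    apply Finsupp.sum_congr
    intro pr' _
    rw [add_mul, add_mul, add_mul]
  rw [Finsupp.sum_single_index ?_hz1, Finsupp.sum_single_index ?_hz2]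
  case _hz1 => simp
  case _hz2 => simp
  rw [← Finsupp.sum_add]
  apply Finsupp.sum_congr
  intro pr _
  simp only [one_mul, tw_one_left]
  ring

lemma apply_eq_sum (f : (FreeMonoid I × FreeMonoid I) →₀ Aq) (z : FreeMonoid I × FreeMonoid I) :
    f z = f.sum fun pr cc => cc * (if pr = z then 1 else 0) := by
  have : (f.sum fun pr cc => cc * (if pr = z then 1 else 0))
      = f.sum fun pr cc => if pr = z then cc else 0 := by
    apply Finsupp.sum_congr
    intro pr _
    split <;> simp
  rw [this, Finsupp.sum_ite_eq']
  split
  · rfl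
  · exact Finsupp.notMem_support_iff.mp (by assumption)

lemma rho_apply_cons (hmul : ∀ w1 w2 w1' w2', b2 (w1, w2) * b2 (w1', w2')
        = tw Bf p w2 w1' • b2 (w1 * w1', w2 * w2'))
    (hr : ∀ i, r (th i) = b2 (FreeMonoid.of i, 1) + b2 (1, FreeMonoid.of i))
    (i : I) (w : FreeMonoid I) (z : FreeMonoid I × FreeMonoid I) :
    rho b2 r (FreeMonoid.of i * w) z
    = (rho b2 r w).sum fun pr cc =>
        cc * ((if (FreeMonoid.of i * pr.1, pr.2) = z then (1:Aq) else 0)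
          + tw Bf p (FreeMonoid.of i) pr.1
            * (if (pr.1, FreeMonoid.of i * pr.2) = z then 1 else 0)) := by
  rw [apply_eq_sum, sum_rho_cons Bf p b2 r hmul hr]

end RhoSection

section RhoSection2
set_option linter.unusedSectionVars false
set_option maxHeartbeats 1000000

variable {I : Type} [DecidableEq I] (Bf : I → I → ℤ) (p : I → ℕ)
variable {T2 : Type} [Ring T2] [Algebra Aq T2]
variable (b2 : Module.Basis (FreeMonoid I × FreeMonoid I) Aq T2)
variable (r : FF I →ₐ[Aq] T2)

lemma fm_one_ne_of_mul (i : I) (u : FreeMonoid I) : (1 : FreeMonoid I) ≠ FreeMonoid.of i * u :=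
  (fm_of_mul_ne_one i u).symm

lemma rho_fst (hone : b2 (1, 1) = 1)
    (hmul : ∀ w1 w2 w1' w2', b2 (w1, w2) * b2 (w1', w2')
        = tw Bf p w2 w1' • b2 (w1 * w1', w2 * w2'))
    (hr : ∀ i, r (th i) = b2 (FreeMonoid.of i, 1) + b2 (1, FreeMonoid.of i)) :
    ∀ (w x : FreeMonoid I), rho b2 r w (x, 1) = if x = w then 1 else 0 := by
  intro w
  induction w using FreeMonoid.recOn with
  | one =>
    intro x
    rw [rho_one b2 r hone]
    simp [Finsupp.single_apply, Prod.ext_iff, eq_comm]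
  | of_mul i w0 ihw =>
    intro x
    rw [rho_apply_cons Bf p b2 r hmul hr]
    induction x using FreeMonoid.recOn with
    | one =>
      rw [if_neg (fm_one_ne_of_mul i w0)]
      apply Finset.sum_eq_zero
      intro pr _
      dsimp only
      have h1 : (if (FreeMonoid.of i * pr.1, pr.2) = ((1:FreeMonoid I), (1:FreeMonoid I)) then (1:Aq) else 0) = 0 :=
        if_neg (fun h => fm_of_mul_ne_one i pr.1 (congrArg Prod.fst h))
      have h2 : (if (pr.1, FreeMonoid.of i * pr.2) = ((1:FreeMonoid I), (1:FreeMonoid I)) then (1:Aq) else 0) = 0 :=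
        if_neg (fun h => fm_of_mul_ne_one i pr.2 (congrArg Prod.snd h))
      rw [h1, h2]
      ring
    | of_mul j x _ =>
      by_cases hij : i = j
      · subst hij
        have step : ((rho b2 r w0).sum fun pr cc =>
            cc * ((if (FreeMonoid.of i * pr.1, pr.2) = (FreeMonoid.of i * x, 1) then (1:Aq) else 0)
              + tw Bf p (FreeMonoid.of i) pr.1
                * (if (pr.1, FreeMonoid.of i * pr.2) = (FreeMonoid.of i * x, 1) then 1 else 0)))
            = (rho b2 r w0).sum fun pr cc => cc * (if pr = (x, 1) then 1 else 0) := by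
          apply Finsupp.sum_congr
          intro pr _
          congr 1
          have h2 : (if (pr.1, FreeMonoid.of i * pr.2) = (FreeMonoid.of i * x, 1) then (1:Aq) else 0) = 0 :=
            if_neg (fun h => fm_of_mul_ne_one i pr.2 (congrArg Prod.snd h))
          rw [h2, mul_zero, add_zero]
          by_cases hpr : pr = (x, 1)
          · subst hpr
            rw [if_pos rfl, if_pos rfl]
          · rw [if_neg hpr, if_neg]
            intro h
            obtain ⟨ha, hb⟩ := Prod.mk.injEq .. ▸ h
            exact hpr (Prod.ext (fm_of_mul_eq_of_mul.mp ha).2 hb)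
        rw [step, ← apply_eq_sum, ihw x]
        simp [fm_of_mul_eq_of_mul]
      · have step : ((rho b2 r w0).sum fun pr cc =>
            cc * ((if (FreeMonoid.of i * pr.1, pr.2) = (FreeMonoid.of j * x, 1) then (1:Aq) else 0)
              + tw Bf p (FreeMonoid.of i) pr.1
                * (if (pr.1, FreeMonoid.of i * pr.2) = (FreeMonoid.of j * x, 1) then 1 else 0)))
            = 0 := by
          apply Finset.sum_eq_zero
          intro pr _
          dsimp only
          have h1 : (if (FreeMonoid.of i * pr.1, pr.2) = (FreeMonoid.of j * x, 1) then (1:Aq) else 0) = 0 :=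
            if_neg (fun h => hij (fm_of_mul_eq_of_mul.mp (congrArg Prod.fst h)).1)
          have h2 : (if (pr.1, FreeMonoid.of i * pr.2) = (FreeMonoid.of j * x, 1) then (1:Aq) else 0) = 0 :=
            if_neg (fun h => fm_of_mul_ne_one i pr.2 (congrArg Prod.snd h))
          rw [h1, h2]
          ring
        rw [step, if_neg (fun h => hij (fm_of_mul_eq_of_mul.mp h).1.symm)]

lemma rho_snd (hone : b2 (1, 1) = 1)
    (hmul : ∀ w1 w2 w1' w2', b2 (w1, w2) * b2 (w1', w2')
        = tw Bf p w2 w1' • b2 (w1 * w1', w2 * w2'))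
    (hr : ∀ i, r (th i) = b2 (FreeMonoid.of i, 1) + b2 (1, FreeMonoid.of i)) :
    ∀ (w m : FreeMonoid I), rho b2 r w (1, m) = if m = w then 1 else 0 := by
  intro w
  induction w using FreeMonoid.recOn with
  | one =>
    intro m
    rw [rho_one b2 r hone]
    simp [Finsupp.single_apply, Prod.ext_iff, eq_comm]
  | of_mul i w0 ihw =>
    intro m
    rw [rho_apply_cons Bf p b2 r hmul hr]
    induction m using FreeMonoid.recOn with
    | one =>
      rw [if_neg (fm_one_ne_of_mul i w0)]
      apply Finset.sum_eq_zero
      intro pr _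
      dsimp only
      have h1 : (if (FreeMonoid.of i * pr.1, pr.2) = ((1:FreeMonoid I), (1:FreeMonoid I)) then (1:Aq) else 0) = 0 :=
        if_neg (fun h => fm_of_mul_ne_one i pr.1 (congrArg Prod.fst h))
      have h2 : (if (pr.1, FreeMonoid.of i * pr.2) = ((1:FreeMonoid I), (1:FreeMonoid I)) then (1:Aq) else 0) = 0 :=
        if_neg (fun h => fm_of_mul_ne_one i pr.2 (congrArg Prod.snd h))
      rw [h1, h2]
      ring
    | of_mul j m0 _ =>
      by_cases hij : i = j
      · subst hij
        have step : ((rho b2 r w0).sum fun pr cc =>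
            cc * ((if (FreeMonoid.of i * pr.1, pr.2) = ((1:FreeMonoid I), FreeMonoid.of i * m0) then (1:Aq) else 0)
              + tw Bf p (FreeMonoid.of i) pr.1
                * (if (pr.1, FreeMonoid.of i * pr.2) = ((1:FreeMonoid I), FreeMonoid.of i * m0) then 1 else 0)))
            = (rho b2 r w0).sum fun pr cc => cc * (if pr = (1, m0) then 1 else 0) := by
          apply Finsupp.sum_congr
          intro pr _
          congr 1
          have h1 : (if (FreeMonoid.of i * pr.1, pr.2) = ((1:FreeMonoid I), FreeMonoid.of i * m0) then (1:Aq) else 0) = 0 :=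
            if_neg (fun h => fm_of_mul_ne_one i pr.1 (congrArg Prod.fst h))
          rw [h1, zero_add]
          by_cases hpr : pr = ((1:FreeMonoid I), m0)
          · subst hpr
            rw [if_pos rfl, if_pos rfl, tw_one_right, one_mul]
          · rw [if_neg hpr, if_neg, mul_zero]
            intro h
            apply hpr
            obtain ⟨ha, hb⟩ := Prod.mk.injEq .. ▸ h
            exact Prod.ext ha (fm_of_mul_eq_of_mul.mp hb).2
        rw [step, ← apply_eq_sum, ihw m0]
        simp [fm_of_mul_eq_of_mul]
      · have step : ((rho b2 r w0).sum fun pr cc =>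
            cc * ((if (FreeMonoid.of i * pr.1, pr.2) = ((1:FreeMonoid I), FreeMonoid.of j * m0) then (1:Aq) else 0)
              + tw Bf p (FreeMonoid.of i) pr.1
                * (if (pr.1, FreeMonoid.of i * pr.2) = ((1:FreeMonoid I), FreeMonoid.of j * m0) then 1 else 0)))
            = 0 := by
          apply Finset.sum_eq_zero
          intro pr _
          dsimp only
          have h1 : (if (FreeMonoid.of i * pr.1, pr.2) = ((1:FreeMonoid I), FreeMonoid.of j * m0) then (1:Aq) else 0) = 0 :=
            if_neg (fun h => fm_of_mul_ne_one i pr.1 (congrArg Prod.fst h))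
          have h2 : (if (pr.1, FreeMonoid.of i * pr.2) = ((1:FreeMonoid I), FreeMonoid.of j * m0) then (1:Aq) else 0) = 0 :=
            if_neg (fun h => hij (fm_of_mul_eq_of_mul.mp (congrArg Prod.snd h)).1)
          rw [h1, h2]
          ring
        rw [step, if_neg (fun h => hij (fm_of_mul_eq_of_mul.mp h).1.symm)]

lemma rho_wt (hone : b2 (1, 1) = 1)
    (hmul : ∀ w1 w2 w1' w2', b2 (w1, w2) * b2 (w1', w2')
        = tw Bf p w2 w1' • b2 (w1 * w1', w2 * w2'))
    (hr : ∀ i, r (th i) = b2 (FreeMonoid.of i, 1) + b2 (1, FreeMonoid.of i))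
    {w : FreeMonoid I} {z : FreeMonoid I × FreeMonoid I} (h : rho b2 r w z ≠ 0) :
    wtF z.1 + wtF z.2 = wtF w ∧ par p z.1 + par p z.2 = par p w := by
  induction w using FreeMonoid.recOn generalizing z with
  | one =>
    rw [rho_one b2 r hone] at h
    have hz : z = (1, 1) := by
      by_contra hz
      rw [Finsupp.single_apply, if_neg (fun hh => hz hh.symm)] at h
      exact h rfl
    subst hz
    simp [wtF_one, par_one]
  | of_mul i w0 ihw =>
    rw [rho_apply_cons Bf p b2 r hmul hr, Finsupp.sum] at h
    obtain ⟨pr, hpr, hne⟩ := Finset.exists_ne_zero_of_sum_ne_zero h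
    have hcc : rho b2 r w0 pr ≠ 0 := Finsupp.mem_support_iff.mp hpr
    obtain ⟨hw1, hw2⟩ := ihw hcc
    by_cases hA : (FreeMonoid.of i * pr.1, pr.2) = z
    · subst hA
      constructor
      · show wtF (FreeMonoid.of i * pr.1) + wtF pr.2 = _
        rw [wtF_mul, wtF_mul, ← hw1, add_assoc]
      · show par p (FreeMonoid.of i * pr.1) + par p pr.2 = _
        rw [par_mul, par_mul, ← hw2, add_assoc]
    · by_cases hB : (pr.1, FreeMonoid.of i * pr.2) = z
      · subst hB
        constructor
        · show wtF pr.1 + wtF (FreeMonoid.of i * pr.2) = _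
          rw [wtF_mul, wtF_mul, ← hw1, add_left_comm]
        · show par p pr.1 + par p (FreeMonoid.of i * pr.2) = _
          rw [par_mul, par_mul, ← hw2, add_left_comm]
      · exfalso
        apply hne
        rw [if_neg hA, if_neg hB]
        ring

lemma rho_tw (hone : b2 (1, 1) = 1)
    (hmul : ∀ w1 w2 w1' w2', b2 (w1, w2) * b2 (w1', w2')
        = tw Bf p w2 w1' • b2 (w1 * w1', w2 * w2'))
    (hr : ∀ i, r (th i) = b2 (FreeMonoid.of i, 1) + b2 (1, FreeMonoid.of i))
    (v : FreeMonoid I) {w : FreeMonoid I} {z : FreeMonoid I × FreeMonoid I}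
    (h : rho b2 r w z ≠ 0) :
    tw Bf p v z.1 * tw Bf p v z.2 = tw Bf p v w := by
  obtain ⟨h1, h2⟩ := rho_wt Bf p b2 r hone hmul hr h
  rw [← tw_mul_right]
  apply tw_congr_right
  · rw [wtF_mul, h1]
  · rw [par_mul, h2]

lemma coassoc (hone : b2 (1, 1) = 1)
    (hmul : ∀ w1 w2 w1' w2', b2 (w1, w2) * b2 (w1', w2')
        = tw Bf p w2 w1' • b2 (w1 * w1', w2 * w2'))
    (hr : ∀ i, r (th i) = b2 (FreeMonoid.of i, 1) + b2 (1, FreeMonoid.of i))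
    (w : FreeMonoid I) (G : FreeMonoid I → FreeMonoid I → FreeMonoid I → Aq) :
    ((rho b2 r w).sum fun pr a => a * (rho b2 r pr.1).sum fun pr' b => b * G pr'.1 pr'.2 pr.2)
    = (rho b2 r w).sum fun pr a => a * (rho b2 r pr.2).sum fun pr' b => b * G pr.1 pr'.1 pr'.2 := by
  induction w using FreeMonoid.recOn generalizing G with
  | one =>
    rw [sum_rho_one b2 r hone, sum_rho_one b2 r hone, sum_rho_one b2 r hone,
      sum_rho_one b2 r hone]
  | of_mul i w0 ihw =>
    set G' : FreeMonoid I → FreeMonoid I → FreeMonoid I → Aq := fun x y z =>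
      G (FreeMonoid.of i * x) y z + tw Bf p (FreeMonoid.of i) x * G x (FreeMonoid.of i * y) z
        + tw Bf p (FreeMonoid.of i) x * tw Bf p (FreeMonoid.of i) y
          * G x y (FreeMonoid.of i * z) with hG'
    have hLHS : ((rho b2 r (FreeMonoid.of i * w0)).sum fun pr a =>
          a * (rho b2 r pr.1).sum fun pr' b => b * G pr'.1 pr'.2 pr.2)
        = (rho b2 r w0).sum fun pr a =>
            a * (rho b2 r pr.1).sum fun pr' b => b * G' pr'.1 pr'.2 pr.2 := by
      rw [sum_rho_cons Bf p b2 r hmul hr i w0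
        (fun pr => (rho b2 r pr.1).sum fun pr' b => b * G pr'.1 pr'.2 pr.2)]
      apply Finsupp.sum_congr
      intro pr _
      congr 1
      rw [sum_rho_cons Bf p b2 r hmul hr i pr.1 (fun pr' => G pr'.1 pr'.2 pr.2),
        Finsupp.mul_sum, ← Finsupp.sum_add]
      apply Finsupp.sum_congr
      intro pr' hpr'
      have htw := rho_tw Bf p b2 r hone hmul hr (FreeMonoid.of i)
        (Finsupp.mem_support_iff.mp hpr')
      rw [hG']
      dsimp only
      rw [← htw]
      ring
    have hRHS : ((rho b2 r (FreeMonoid.of i * w0)).sum fun pr a =>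
          a * (rho b2 r pr.2).sum fun pr' b => b * G pr.1 pr'.1 pr'.2)
        = (rho b2 r w0).sum fun pr a =>
            a * (rho b2 r pr.2).sum fun pr' b => b * G' pr.1 pr'.1 pr'.2 := by
      rw [sum_rho_cons Bf p b2 r hmul hr i w0
        (fun pr => (rho b2 r pr.2).sum fun pr' b => b * G pr.1 pr'.1 pr'.2)]
      apply Finsupp.sum_congr
      intro pr _
      congr 1
      rw [sum_rho_cons Bf p b2 r hmul hr i pr.2 (fun pr' => G pr.1 pr'.1 pr'.2),
        Finsupp.mul_sum, ← Finsupp.sum_add]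
      apply Finsupp.sum_congr
      intro pr' _
      rw [hG']
      dsimp only
      ring
    rw [hLHS, hRHS]
    exact ihw G'

end RhoSection2

section CfSection
set_option linter.unusedSectionVars false
set_option maxHeartbeats 1000000

variable {I : Type} [DecidableEq I] (Bf : I → I → ℤ) (p : I → ℕ)
variable {T2 : Type} [Ring T2] [Algebra Aq T2]
variable (b2 : Module.Basis (FreeMonoid I × FreeMonoid I) Aq T2)
variable (r : FF I →ₐ[Aq] T2)
variable (ν : I → Aq)

/-- the recursively defined values of the bilinear form on pairs of words
(second argument of the form given as a list) -/
def cf {I : Type} [DecidableEq I] (ρ : FreeMonoid I → ((FreeMonoid I × FreeMonoid I) →₀ Aq))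
    (ν : I → Aq) : List I → FreeMonoid I → Aq
  | [], w => if w = 1 then 1 else 0
  | i :: y, w => (ρ w).sum fun pr cc =>
      cc * (if pr.1 = FreeMonoid.of i then ν i else 0) * cf ρ ν y pr.2

lemma cf_nil (ρ : FreeMonoid I → ((FreeMonoid I × FreeMonoid I) →₀ Aq)) (w : FreeMonoid I) :
    cf ρ ν [] w = if w = 1 then 1 else 0 := rfl

lemma cf_cons (ρ : FreeMonoid I → ((FreeMonoid I × FreeMonoid I) →₀ Aq)) (i : I) (y : List I)
    (w : FreeMonoid I) :
    cf ρ ν (i :: y) w = (ρ w).sum fun pr cc =>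
      cc * (if pr.1 = FreeMonoid.of i then ν i else 0) * cf ρ ν y pr.2 := rfl

lemma cf_one (hone : b2 (1, 1) = 1) (y : List I) :
    cf (rho b2 r) ν y 1 = if y = [] then 1 else 0 := by
  cases y with
  | nil => simp [cf_nil]
  | cons i y0 =>
    rw [cf_cons]
    have step : (fun (pr : FreeMonoid I × FreeMonoid I) (cc : Aq) =>
        cc * (if pr.1 = FreeMonoid.of i then ν i else 0) * cf (rho b2 r) ν y0 pr.2)
        = fun pr cc => cc * ((if pr.1 = FreeMonoid.of i then ν i else 0)
            * cf (rho b2 r) ν y0 pr.2) := by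
      funext pr cc; rw [mul_assoc]
    rw [step, sum_rho_one b2 r hone, if_neg (fun h => fm_of_ne_one i h.symm), zero_mul]
    simp

lemma cf_of (hone : b2 (1, 1) = 1)
    (hr : ∀ i, r (th i) = b2 (FreeMonoid.of i, 1) + b2 (1, FreeMonoid.of i))
    (z : List I) (j : I) :
    cf (rho b2 r) ν z (FreeMonoid.of j) = if z = [j] then ν j else 0 := by
  cases z with
  | nil =>
    rw [cf_nil, if_neg (fm_of_ne_one j), if_neg (by simp)]
  | cons i z0 =>
    rw [cf_cons, rho_of b2 r hr]
    rw [Finsupp.sum_add_index' (fun pr => by simp) (fun pr c1 c2 => by ring),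
      Finsupp.sum_single_index (by simp), Finsupp.sum_single_index (by simp)]
    dsimp only
    rw [show (if (1:FreeMonoid I) = FreeMonoid.of i then ν i else 0) = 0 from
      if_neg (fun h => fm_of_ne_one i h.symm), mul_zero, zero_mul, add_zero, one_mul]
    rw [cf_one b2 r ν hone]
    by_cases h1 : j = i
    · subst h1
      rw [if_pos rfl]
      by_cases h2 : z0 = []
      · subst h2; simp
      · rw [if_neg h2, mul_zero, if_neg (by simp [h2])]
    · rw [if_neg (fun h => h1 (FreeMonoid.of_injective h)), zero_mul,
        if_neg (by simp only [List.cons.injEq]; intro h; exact h1 h.1.symm)]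

lemma sum_rho_fst_one (hone : b2 (1, 1) = 1)
    (hmul : ∀ w1 w2 w1' w2', b2 (w1, w2) * b2 (w1', w2')
        = tw Bf p w2 w1' • b2 (w1 * w1', w2 * w2'))
    (hr : ∀ i, r (th i) = b2 (FreeMonoid.of i, 1) + b2 (1, FreeMonoid.of i))
    (v : FreeMonoid I) (K : FreeMonoid I → Aq) :
    ((rho b2 r v).sum fun pr b => b * (if pr.1 = 1 then K pr.2 else 0)) = K v := by
  have hmem : ((1 : FreeMonoid I), v) ∈ (rho b2 r v).support := by
    rw [Finsupp.mem_support_iff, rho_snd Bf p b2 r hone hmul hr v v, if_pos rfl]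
    exact one_ne_zero
  rw [Finsupp.sum, Finset.sum_eq_single_of_mem _ hmem ?side]
  · rw [rho_snd Bf p b2 r hone hmul hr v v, if_pos rfl, if_pos rfl, one_mul]
  case side =>
    intro pr hpr hne
    by_cases h1 : pr.1 = 1
    · exfalso
      have hpr2 : pr.2 ≠ v := fun h2 => hne (Prod.ext h1 h2)
      have : rho b2 r v pr = 0 := by
        rw [show pr = (1, pr.2) from Prod.ext h1 rfl,
          rho_snd Bf p b2 r hone hmul hr v pr.2, if_neg hpr2]
      exact Finsupp.mem_support_iff.mp hpr this
    · rw [if_neg h1, mul_zero]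

lemma sum_rho_snd_one (hone : b2 (1, 1) = 1)
    (hmul : ∀ w1 w2 w1' w2', b2 (w1, w2) * b2 (w1', w2')
        = tw Bf p w2 w1' • b2 (w1 * w1', w2 * w2'))
    (hr : ∀ i, r (th i) = b2 (FreeMonoid.of i, 1) + b2 (1, FreeMonoid.of i))
    (u : FreeMonoid I) (K : FreeMonoid I → Aq) :
    ((rho b2 r u).sum fun pr b => b * (if pr.2 = 1 then K pr.1 else 0)) = K u := by
  have hmem : (u, (1 : FreeMonoid I)) ∈ (rho b2 r u).support := by
    rw [Finsupp.mem_support_iff, rho_fst Bf p b2 r hone hmul hr u u, if_pos rfl]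
    exact one_ne_zero
  rw [Finsupp.sum, Finset.sum_eq_single_of_mem _ hmem ?side]
  · rw [rho_fst Bf p b2 r hone hmul hr u u, if_pos rfl, if_pos rfl, one_mul]
  case side =>
    intro pr hpr hne
    by_cases h1 : pr.2 = 1
    · exfalso
      have hpr2 : pr.1 ≠ u := fun h2 => hne (Prod.ext h2 h1)
      have : rho b2 r u pr = 0 := by
        rw [show pr = (pr.1, 1) from Prod.ext rfl h1,
          rho_fst Bf p b2 r hone hmul hr u pr.1, if_neg hpr2]
      exact Finsupp.mem_support_iff.mp hpr this
    · rw [if_neg h1, mul_zero]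

lemma cf_mul_right (hone : b2 (1, 1) = 1)
    (hmul : ∀ w1 w2 w1' w2', b2 (w1, w2) * b2 (w1', w2')
        = tw Bf p w2 w1' • b2 (w1 * w1', w2 * w2'))
    (hr : ∀ i, r (th i) = b2 (FreeMonoid.of i, 1) + b2 (1, FreeMonoid.of i)) :
    ∀ (u : List I) (w : FreeMonoid I) (v : List I),
    cf (rho b2 r) ν (u ++ v) w = (rho b2 r w).sum fun pr a =>
      a * cf (rho b2 r) ν u pr.1 * cf (rho b2 r) ν v pr.2 := by
  intro u
  induction u with
  | nil =>
    intro w v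
    rw [List.nil_append]
    symm
    have step : (fun (pr : FreeMonoid I × FreeMonoid I) (a : Aq) =>
        a * cf (rho b2 r) ν [] pr.1 * cf (rho b2 r) ν v pr.2)
        = fun pr a => a * (if pr.1 = 1 then cf (rho b2 r) ν v pr.2 else 0) := by
      funext pr a
      rw [cf_nil]
      by_cases h : pr.1 = 1
      · rw [if_pos h, if_pos h, mul_one]
      · rw [if_neg h, if_neg h, mul_zero, zero_mul]
    rw [step, sum_rho_fst_one Bf p b2 r hone hmul hr w (fun m => cf (rho b2 r) ν v m)]
  | cons i u ihu =>
    intro w v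
    rw [List.cons_append, cf_cons]
    have step1 : (fun (pr : FreeMonoid I × FreeMonoid I) (cc : Aq) =>
        cc * (if pr.1 = FreeMonoid.of i then ν i else 0) * cf (rho b2 r) ν (u ++ v) pr.2)
        = fun pr cc => cc * (rho b2 r pr.2).sum fun pr' b =>
            b * ((if pr.1 = FreeMonoid.of i then ν i else 0)
              * cf (rho b2 r) ν u pr'.1 * cf (rho b2 r) ν v pr'.2) := by
      funext pr cc
      rw [ihu pr.2 v, mul_assoc, Finsupp.mul_sum]
      congr 1
      apply Finsupp.sum_congr
      intro pr' _
      ring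
    rw [step1]
    rw [← coassoc Bf p b2 r hone hmul hr w
      (fun x y z => (if x = FreeMonoid.of i then ν i else 0)
        * cf (rho b2 r) ν u y * cf (rho b2 r) ν v z)]
    apply Finsupp.sum_congr
    intro pr _
    rw [cf_cons, mul_assoc, Finsupp.sum_mul]
    congr 1
    apply Finsupp.sum_congr
    intro pr' _
    ring

end CfSection

section CfSection2
set_option linter.unusedSectionVars false
set_option maxHeartbeats 4000000

variable {I : Type} [DecidableEq I] (Bf : I → I → ℤ) (p : I → ℕ)
variable {T2 : Type} [Ring T2] [Algebra Aq T2]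
variable (b2 : Module.Basis (FreeMonoid I × FreeMonoid I) Aq T2)
variable (r : FF I →ₐ[Aq] T2)
variable (ν : I → Aq)

lemma cf_wt (hone : b2 (1, 1) = 1)
    (hmul : ∀ w1 w2 w1' w2', b2 (w1, w2) * b2 (w1', w2')
        = tw Bf p w2 w1' • b2 (w1 * w1', w2 * w2'))
    (hr : ∀ i, r (th i) = b2 (FreeMonoid.of i, 1) + b2 (1, FreeMonoid.of i)) :
    ∀ (y : List I) (w : FreeMonoid I), cf (rho b2 r) ν y w ≠ 0 →
      wtF w = wtF (FreeMonoid.ofList y) ∧ par p w = par p (FreeMonoid.ofList y) := by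
  intro y
  induction y with
  | nil =>
    intro w h
    rw [cf_nil] at h
    by_cases hw : w = 1
    · subst hw
      exact ⟨rfl, rfl⟩
    · rw [if_neg hw] at h
      exact absurd rfl h
  | cons i y0 ih =>
    intro w h
    rw [cf_cons, Finsupp.sum] at h
    obtain ⟨pr, hpr, hne⟩ := Finset.exists_ne_zero_of_sum_ne_zero h
    have hrw : rho b2 r w pr ≠ 0 := Finsupp.mem_support_iff.mp hpr
    by_cases hfst : pr.1 = FreeMonoid.of i
    · have hcf : cf (rho b2 r) ν y0 pr.2 ≠ 0 := by
        intro h0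
        apply hne
        rw [h0, mul_zero]
      obtain ⟨hw1, hw2⟩ := rho_wt Bf p b2 r hone hmul hr hrw
      obtain ⟨hy1, hy2⟩ := ih pr.2 hcf
      constructor
      · rw [← hw1, hfst, fm_ofList_cons, wtF_mul, hy1]
      · rw [← hw2, hfst, fm_ofList_cons, par_mul, hy2]
    · exfalso
      apply hne
      rw [if_neg hfst, mul_zero, zero_mul]

lemma ite_prod_split (i : I) (x x' m : FreeMonoid I) (C a b : Aq) :
    a * b * tw Bf p m x' * ((if x * x' = FreeMonoid.of i then ν i else 0) * C)
    = b * (if x' = 1 then (if x = FreeMonoid.of i then a * (ν i * C) else 0) else 0)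
      + a * (if x = 1 then
          b * tw Bf p m x' * (if x' = FreeMonoid.of i then ν i * C else 0) else 0) := by
  by_cases hx' : x' = 1
  · subst hx'
    rw [mul_one, if_pos rfl]
    by_cases hx : x = FreeMonoid.of i
    · subst hx
      rw [if_pos rfl, if_pos rfl, if_neg (fm_of_ne_one i), tw_one_right]
      ring
    · rw [if_neg hx, if_neg hx]
      have hz : (if (1 : FreeMonoid I) = FreeMonoid.of i then ν i * C else 0) = 0 :=
        if_neg (fun h => fm_of_ne_one i h.symm)
      rw [hz]
      by_cases hx1 : x = 1
      · rw [if_pos hx1]; ring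
      · rw [if_neg hx1]; ring
  · rw [if_neg hx']
    by_cases hx1 : x = 1
    · subst hx1
      rw [one_mul, if_pos rfl]
      by_cases hof : x' = FreeMonoid.of i
      · subst hof
        rw [if_pos rfl, if_pos rfl]
        ring
      · rw [if_neg hof, if_neg hof]
        ring
    · rw [if_neg (fun h => by
        rcases fm_mul_eq_of.mp h with ⟨_, h2⟩ | ⟨h1, _⟩
        exacts [hx' h2, hx1 h1]), if_neg hx1]
      ring

lemma cf_mul_left (hone : b2 (1, 1) = 1)
    (hmul : ∀ w1 w2 w1' w2', b2 (w1, w2) * b2 (w1', w2')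
        = tw Bf p w2 w1' • b2 (w1 * w1', w2 * w2'))
    (hr : ∀ i, r (th i) = b2 (FreeMonoid.of i, 1) + b2 (1, FreeMonoid.of i))
    (hsymm : ∀ i j, Bf i j = Bf j i) :
    ∀ (y : List I) (u v : FreeMonoid I),
      cf (rho b2 r) ν y (u * v)
      = (rho b2 r (FreeMonoid.ofList y)).sum fun pr a =>
          a * cf (rho b2 r) ν (FreeMonoid.toList pr.1) u
            * cf (rho b2 r) ν (FreeMonoid.toList pr.2) v := by
  intro y
  induction y with
  | nil =>
    intro u v
    have step : (fun (pr : FreeMonoid I × FreeMonoid I) (a : Aq) =>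
        a * cf (rho b2 r) ν (FreeMonoid.toList pr.1) u
          * cf (rho b2 r) ν (FreeMonoid.toList pr.2) v)
        = fun pr a => a * (cf (rho b2 r) ν (FreeMonoid.toList pr.1) u
            * cf (rho b2 r) ν (FreeMonoid.toList pr.2) v) := by
      funext pr a; rw [mul_assoc]
    rw [show FreeMonoid.ofList ([] : List I) = 1 from rfl, step, sum_rho_one b2 r hone]
    rw [FreeMonoid.toList_one, cf_nil, cf_nil, cf_nil]
    by_cases hu : u = 1
    · subst hu
      rw [one_mul, if_pos rfl, one_mul]
    · rw [if_neg hu, zero_mul, if_neg (fun h => hu (fm_mul_eq_one.mp h).1)]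
  | cons i y0 ihy =>
    intro u v
    have hL : cf (rho b2 r) ν (i :: y0) (u * v)
        = ((rho b2 r u).sum fun pr a => if pr.1 = FreeMonoid.of i
              then a * (ν i * cf (rho b2 r) ν y0 (pr.2 * v)) else 0)
          + ((rho b2 r v).sum fun pr b => if pr.1 = FreeMonoid.of i
              then b * (tw Bf p u (FreeMonoid.of i)
                * (ν i * cf (rho b2 r) ν y0 (u * pr.2))) else 0) := by
      rw [cf_cons]
      have s1 : (fun (pr : FreeMonoid I × FreeMonoid I) (cc : Aq) =>
          cc * (if pr.1 = FreeMonoid.of i then ν i else 0) * cf (rho b2 r) ν y0 pr.2)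
          = fun pr cc => cc * ((if pr.1 = FreeMonoid.of i then ν i else 0)
              * cf (rho b2 r) ν y0 pr.2) := by
        funext pr cc; rw [mul_assoc]
      rw [s1, sum_rho_mul Bf p b2 r hmul u v
        (fun pr => (if pr.1 = FreeMonoid.of i then ν i else 0) * cf (rho b2 r) ν y0 pr.2)]
      have s2 : ((rho b2 r u).sum fun pr a => (rho b2 r v).sum fun pr' b =>
            a * b * tw Bf p pr.2 pr'.1
              * ((if (pr.1 * pr'.1, pr.2 * pr'.2).1 = FreeMonoid.of i then ν i else 0)
                * cf (rho b2 r) ν y0 (pr.1 * pr'.1, pr.2 * pr'.2).2))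
          = (rho b2 r u).sum fun pr a =>
              ((rho b2 r v).sum fun pr' b =>
                b * (if pr'.1 = 1 then (if pr.1 = FreeMonoid.of i
                  then a * (ν i * cf (rho b2 r) ν y0 (pr.2 * pr'.2)) else 0) else 0))
              + ((rho b2 r v).sum fun pr' b =>
                a * (if pr.1 = 1 then b * tw Bf p pr.2 pr'.1
                  * (if pr'.1 = FreeMonoid.of i
                    then ν i * cf (rho b2 r) ν y0 (pr.2 * pr'.2) else 0) else 0)) := by
        apply Finsupp.sum_congr
        intro pr _
        rw [← Finsupp.sum_add]
        apply Finsupp.sum_congr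
        intro pr' _
        exact ite_prod_split Bf p ν i pr.1 pr'.1 pr.2
          (cf (rho b2 r) ν y0 (pr.2 * pr'.2)) (rho b2 r u pr) (rho b2 r v pr')
      rw [s2, Finsupp.sum_add]
      congr 1
      · apply Finsupp.sum_congr
        intro pr _
        exact sum_rho_fst_one Bf p b2 r hone hmul hr v
          (fun m => if pr.1 = FreeMonoid.of i
            then rho b2 r u pr * (ν i * cf (rho b2 r) ν y0 (pr.2 * m)) else 0)
      · rw [Finsupp.sum_comm]
        apply Finsupp.sum_congr
        intro pr' _
        rw [sum_rho_fst_one Bf p b2 r hone hmul hr u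
          (fun m => rho b2 r v pr' * tw Bf p m pr'.1
            * (if pr'.1 = FreeMonoid.of i
              then ν i * cf (rho b2 r) ν y0 (m * pr'.2) else 0))]
        by_cases h : pr'.1 = FreeMonoid.of i
        · rw [if_pos h, if_pos h, h]
          ring
        · rw [if_neg h, if_neg h, mul_zero]
    have hR : ((rho b2 r (FreeMonoid.ofList (i :: y0))).sum fun pr a =>
          a * cf (rho b2 r) ν (FreeMonoid.toList pr.1) u
            * cf (rho b2 r) ν (FreeMonoid.toList pr.2) v)
        = ((rho b2 r u).sum fun pr a => if pr.1 = FreeMonoid.of i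
              then a * (ν i * cf (rho b2 r) ν y0 (pr.2 * v)) else 0)
          + ((rho b2 r v).sum fun pr b => if pr.1 = FreeMonoid.of i
              then b * (tw Bf p u (FreeMonoid.of i)
                * (ν i * cf (rho b2 r) ν y0 (u * pr.2))) else 0) := by
      have s1 : (fun (pr : FreeMonoid I × FreeMonoid I) (a : Aq) =>
          a * cf (rho b2 r) ν (FreeMonoid.toList pr.1) u
            * cf (rho b2 r) ν (FreeMonoid.toList pr.2) v)
          = fun pr a => a * (cf (rho b2 r) ν (FreeMonoid.toList pr.1) u
              * cf (rho b2 r) ν (FreeMonoid.toList pr.2) v) := by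
        funext pr a; rw [mul_assoc]
      rw [fm_ofList_cons, s1, sum_rho_cons Bf p b2 r hmul hr i (FreeMonoid.ofList y0)
        (fun pr => cf (rho b2 r) ν (FreeMonoid.toList pr.1) u
          * cf (rho b2 r) ν (FreeMonoid.toList pr.2) v)]
      have s2 : ((rho b2 r (FreeMonoid.ofList y0)).sum fun pr a =>
            a * (cf (rho b2 r) ν (FreeMonoid.toList (FreeMonoid.of i * pr.1)) u
                * cf (rho b2 r) ν (FreeMonoid.toList pr.2) v
              + tw Bf p (FreeMonoid.of i) pr.1
                * (cf (rho b2 r) ν (FreeMonoid.toList pr.1) u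
                  * cf (rho b2 r) ν (FreeMonoid.toList (FreeMonoid.of i * pr.2)) v)))
          = (rho b2 r (FreeMonoid.ofList y0)).sum (fun pr a =>
              ((rho b2 r u).sum fun pr'' b =>
                b * (if pr''.1 = FreeMonoid.of i then ν i
                  * (a * cf (rho b2 r) ν (FreeMonoid.toList pr.1) pr''.2
                    * cf (rho b2 r) ν (FreeMonoid.toList pr.2) v) else 0))
              + ((rho b2 r v).sum fun pr'' b =>
                b * (if pr''.1 = FreeMonoid.of i then ν i
                  * (a * tw Bf p (FreeMonoid.of i) pr.1
                    * cf (rho b2 r) ν (FreeMonoid.toList pr.1) u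
                    * cf (rho b2 r) ν (FreeMonoid.toList pr.2) pr''.2) else 0))) := by
        apply Finsupp.sum_congr
        intro pr _
        rw [mul_add]
        congr 1
        · rw [fm_toList_of_mul, cf_cons, Finsupp.sum_mul, Finsupp.mul_sum]
          apply Finsupp.sum_congr
          intro pr'' _
          by_cases h : pr''.1 = FreeMonoid.of i
          · rw [if_pos h, if_pos h]; ring
          · rw [if_neg h, if_neg h]; ring
        · rw [fm_toList_of_mul, cf_cons, Finsupp.mul_sum, Finsupp.mul_sum, Finsupp.mul_sum]
          apply Finsupp.sum_congr
          intro pr'' _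
          by_cases h : pr''.1 = FreeMonoid.of i
          · rw [if_pos h, if_pos h]; ring
          · rw [if_neg h, if_neg h]; ring
      rw [s2, Finsupp.sum_add]
      congr 1
      · rw [Finsupp.sum_comm]
        apply Finsupp.sum_congr
        intro pr'' _
        by_cases h : pr''.1 = FreeMonoid.of i
        · have inner : ((rho b2 r (FreeMonoid.ofList y0)).sum fun pr a =>
              rho b2 r u pr'' * (if pr''.1 = FreeMonoid.of i then ν i
                * (a * cf (rho b2 r) ν (FreeMonoid.toList pr.1) pr''.2
                  * cf (rho b2 r) ν (FreeMonoid.toList pr.2) v) else 0))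
              = rho b2 r u pr'' * ν i * ((rho b2 r (FreeMonoid.ofList y0)).sum fun pr a =>
                  a * cf (rho b2 r) ν (FreeMonoid.toList pr.1) pr''.2
                    * cf (rho b2 r) ν (FreeMonoid.toList pr.2) v) := by
            rw [Finsupp.mul_sum]
            apply Finsupp.sum_congr
            intro pr _
            rw [if_pos h]
            ring
          rw [inner, ← ihy pr''.2 v, if_pos h]
          ring
        · rw [if_neg h]
          have inner : ((rho b2 r (FreeMonoid.ofList y0)).sum fun pr a =>
              rho b2 r u pr'' * (if pr''.1 = FreeMonoid.of i then ν i
                * (a * cf (rho b2 r) ν (FreeMonoid.toList pr.1) pr''.2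
                  * cf (rho b2 r) ν (FreeMonoid.toList pr.2) v) else 0)) = 0 := by
            apply Finset.sum_eq_zero
            intro pr _
            dsimp only
            rw [if_neg h, mul_zero]
          rw [inner]
      · rw [Finsupp.sum_comm]
        apply Finsupp.sum_congr
        intro pr'' _
        by_cases h : pr''.1 = FreeMonoid.of i
        · have tws : ((rho b2 r (FreeMonoid.ofList y0)).sum fun pr a =>
              a * tw Bf p (FreeMonoid.of i) pr.1
                * cf (rho b2 r) ν (FreeMonoid.toList pr.1) u
                * cf (rho b2 r) ν (FreeMonoid.toList pr.2) pr''.2)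
              = tw Bf p u (FreeMonoid.of i)
                * ((rho b2 r (FreeMonoid.ofList y0)).sum fun pr a =>
                  a * cf (rho b2 r) ν (FreeMonoid.toList pr.1) u
                    * cf (rho b2 r) ν (FreeMonoid.toList pr.2) pr''.2) := by
            rw [Finsupp.mul_sum]
            apply Finsupp.sum_congr
            intro pr _
            by_cases hcu : cf (rho b2 r) ν (FreeMonoid.toList pr.1) u = 0
            · rw [hcu]; ring
            · obtain ⟨hwf, hpar⟩ := cf_wt Bf p b2 r ν hone hmul hr
                (FreeMonoid.toList pr.1) u hcu
              rw [FreeMonoid.ofList_toList] at hwf hpar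
              have htw : tw Bf p (FreeMonoid.of i) pr.1 = tw Bf p u (FreeMonoid.of i) := by
                rw [tw_congr_right Bf (FreeMonoid.of i) hwf.symm hpar.symm,
                  tw_comm hsymm]
              rw [htw]
              ring
          have inner : ((rho b2 r (FreeMonoid.ofList y0)).sum fun pr a =>
              rho b2 r v pr'' * (if pr''.1 = FreeMonoid.of i then ν i
                * (a * tw Bf p (FreeMonoid.of i) pr.1
                  * cf (rho b2 r) ν (FreeMonoid.toList pr.1) u
                  * cf (rho b2 r) ν (FreeMonoid.toList pr.2) pr''.2) else 0))
              = rho b2 r v pr'' * ν i * ((rho b2 r (FreeMonoid.ofList y0)).sum fun pr a =>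
                  a * tw Bf p (FreeMonoid.of i) pr.1
                    * cf (rho b2 r) ν (FreeMonoid.toList pr.1) u
                    * cf (rho b2 r) ν (FreeMonoid.toList pr.2) pr''.2) := by
            rw [Finsupp.mul_sum]
            apply Finsupp.sum_congr
            intro pr _
            rw [if_pos h]
            ring
          rw [inner, tws, ← ihy u pr''.2, if_pos h]
          ring
        · rw [if_neg h]
          have inner : ((rho b2 r (FreeMonoid.ofList y0)).sum fun pr a =>
              rho b2 r v pr'' * (if pr''.1 = FreeMonoid.of i then ν i
                * (a * tw Bf p (FreeMonoid.of i) pr.1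
                  * cf (rho b2 r) ν (FreeMonoid.toList pr.1) u
                  * cf (rho b2 r) ν (FreeMonoid.toList pr.2) pr''.2) else 0)) = 0 := by
            apply Finset.sum_eq_zero
            intro pr _
            dsimp only
            rw [if_neg h, mul_zero]
          rw [inner]
    rw [hL, ← hR]

lemma cf_symm (hone : b2 (1, 1) = 1)
    (hmul : ∀ w1 w2 w1' w2', b2 (w1, w2) * b2 (w1', w2')
        = tw Bf p w2 w1' • b2 (w1 * w1', w2 * w2'))
    (hr : ∀ i, r (th i) = b2 (FreeMonoid.of i, 1) + b2 (1, FreeMonoid.of i))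
    (hsymm : ∀ i j, Bf i j = Bf j i) :
    ∀ (y : List I) (w : FreeMonoid I),
      cf (rho b2 r) ν y w = cf (rho b2 r) ν (FreeMonoid.toList w) (FreeMonoid.ofList y) := by
  intro y
  induction y with
  | nil =>
    intro w
    rw [cf_nil, show FreeMonoid.ofList ([] : List I) = 1 from rfl, cf_one b2 r ν hone]
    by_cases h : w = 1
    · subst h
      rw [if_pos rfl, if_pos (by simp)]
    · rw [if_neg h, if_neg (fun hh => h (by
        rw [← FreeMonoid.ofList_toList w, hh]; rfl))]
  | cons i y0 ih =>
    intro w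
    rw [cf_cons, fm_ofList_cons,
      cf_mul_left Bf p b2 r ν hone hmul hr hsymm (FreeMonoid.toList w)
        (FreeMonoid.of i) (FreeMonoid.ofList y0),
      FreeMonoid.ofList_toList]
    apply Finsupp.sum_congr
    intro pr _
    rw [ih pr.2, cf_of b2 r ν hone hr (FreeMonoid.toList pr.1) i]
    by_cases h : pr.1 = FreeMonoid.of i
    · rw [if_pos h, if_pos (by rw [h, FreeMonoid.toList_of])]
    · rw [if_neg h, if_neg (fun hh => h (by
        rw [← FreeMonoid.ofList_toList pr.1, hh]
        apply FreeMonoid.toList.injective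
        simp))]

end CfSection2

section BformSection
set_option linter.unusedSectionVars false
set_option maxHeartbeats 4000000
set_option synthInstance.maxHeartbeats 1000000

variable {I : Type} [DecidableEq I] (Bf : I → I → ℤ) (p d : I → ℕ)
variable {T2 : Type} [Ring T2] [Algebra Aq T2]
variable (b2 : Module.Basis (FreeMonoid I × FreeMonoid I) Aq T2)
variable (r : FF I →ₐ[Aq] T2)
variable (ν : I → Aq)

/-- inner layer of the bilinear form -/
def inner1 (w : FreeMonoid I) : FF I →ₗ[Aq] Aq :=
  Finsupp.lsum Aq (fun w' =>
    (LinearMap.id : Aq →ₗ[Aq] Aq).smulRight (cf (rho b2 r) ν (FreeMonoid.toList w') w))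
    ∘ₗ (MonoidAlgebra.coeffLinearEquiv Aq).toLinearMap

/-- the bilinear form, as a linear map into the dual -/
def Bform : FF I →ₗ[Aq] FF I →ₗ[Aq] Aq :=
  Finsupp.lsum Aq (fun w => (LinearMap.id : Aq →ₗ[Aq] Aq).smulRight (inner1 b2 r ν w))
    ∘ₗ (MonoidAlgebra.coeffLinearEquiv Aq).toLinearMap

lemma inner1_apply (w : FreeMonoid I) (y : FF I) :
    inner1 b2 r ν w y = y.coeff.sum fun w' b => b * cf (rho b2 r) ν (FreeMonoid.toList w') w := by
  rw [inner1, LinearMap.comp_apply, LinearEquiv.coe_coe, MonoidAlgebra.coeffLinearEquiv_apply]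
  erw [Finsupp.lsum_apply]
  apply Finsupp.sum_congr
  intro w' _
  rw [LinearMap.smulRight_apply, LinearMap.id_apply, smul_eq_mul]

lemma Bform_apply (x y : FF I) :
    Bform b2 r ν x y
      = x.coeff.sum fun w a => a * y.coeff.sum fun w' b => b * cf (rho b2 r) ν (FreeMonoid.toList w') w := by
  rw [Bform, LinearMap.comp_apply, LinearEquiv.coe_coe, MonoidAlgebra.coeffLinearEquiv_apply]
  erw [Finsupp.lsum_apply, LinearMap.finsupp_sum_apply]
  apply Finsupp.sum_congr
  intro w _
  rw [LinearMap.smulRight_apply, LinearMap.id_apply, LinearMap.smul_apply, smul_eq_mul,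
    inner1_apply]

lemma single_eq_smul_ofW (w : FreeMonoid I) (a : Aq) :
    (MonoidAlgebra.single w a : FF I) = a • ofW w := by
  rw [ofW, MonoidAlgebra.of_apply, MonoidAlgebra.smul_single', mul_one]

lemma Bform_single (w w' : FreeMonoid I) :
    Bform b2 r ν (ofW w) (ofW w') = cf (rho b2 r) ν (FreeMonoid.toList w') w := by
  rw [Bform_apply, ofW, ofW, MonoidAlgebra.of_apply, MonoidAlgebra.of_apply,
    MonoidAlgebra.coeff_single, MonoidAlgebra.coeff_single]
  rw [Finsupp.sum_single_index (by simp), Finsupp.sum_single_index (by simp), one_mul, one_mul]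

lemma rho_def (w : FreeMonoid I) : b2.repr (r (ofW w)) = rho b2 r w := rfl

lemma Bform_symm (hone : b2 (1, 1) = 1)
    (hmul : ∀ w1 w2 w1' w2', b2 (w1, w2) * b2 (w1', w2')
        = tw Bf p w2 w1' • b2 (w1 * w1', w2 * w2'))
    (hr : ∀ i, r (th i) = b2 (FreeMonoid.of i, 1) + b2 (1, FreeMonoid.of i))
    (hsymm : ∀ i j, Bf i j = Bf j i)
    (x y : FF I) : Bform b2 r ν x y = Bform b2 r ν y x := by
  rw [Bform_apply, Bform_apply]
  have step : ∀ (x y : FF I),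
      (x.coeff.sum fun w a => a * y.coeff.sum fun w' b => b * cf (rho b2 r) ν (FreeMonoid.toList w') w)
      = x.coeff.sum fun w a => y.coeff.sum fun w' b =>
          a * (b * cf (rho b2 r) ν (FreeMonoid.toList w') w) := by
    intro x y
    apply Finsupp.sum_congr
    intro w _
    rw [Finsupp.mul_sum]
  rw [step, step, Finsupp.sum_comm]
  apply Finsupp.sum_congr
  intro w' b'mem
  apply Finsupp.sum_congr
  intro w _
  rw [cf_symm Bf p b2 r ν hone hmul hr hsymm (FreeMonoid.toList w') w,
    FreeMonoid.ofList_toList]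
  ring

lemma Bform_mul_right_single (hone : b2 (1, 1) = 1)
    (hmul : ∀ w1 w2 w1' w2', b2 (w1, w2) * b2 (w1', w2')
        = tw Bf p w2 w1' • b2 (w1 * w1', w2 * w2'))
    (hr : ∀ i, r (th i) = b2 (FreeMonoid.of i, 1) + b2 (1, FreeMonoid.of i))
    (w : FreeMonoid I) (y' y'' : FF I) :
    Bform b2 r ν (ofW w) (y' * y'')
      = (rho b2 r w).sum fun pr c =>
          c * Bform b2 r ν (ofW pr.1) y' * Bform b2 r ν (ofW pr.2) y'' := by
  induction y' using MonoidAlgebra.induction_linear with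
  | zero =>
    rw [zero_mul, map_zero]
    symm
    apply Finset.sum_eq_zero
    intro pr _
    dsimp only
    rw [map_zero, mul_zero, zero_mul]
  | add f g hf hg =>
    rw [add_mul, map_add, hf, hg, ← Finsupp.sum_add]
    apply Finsupp.sum_congr
    intro pr _
    rw [map_add]
    ring
  | single u b =>
    induction y'' using MonoidAlgebra.induction_linear with
    | zero =>
      rw [mul_zero, map_zero]
      symm
      apply Finset.sum_eq_zero
      intro pr _
      dsimp only
      rw [map_zero, mul_zero]
    | add f g hf hg =>
      rw [mul_add, map_add, hf, hg, ← Finsupp.sum_add]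
      apply Finsupp.sum_congr
      intro pr _
      rw [map_add]
      ring
    | single v c2 =>
      rw [single_eq_smul_ofW u b, single_eq_smul_ofW v c2, smul_mul_smul_comm, ← ofW_mul,
        map_smul, smul_eq_mul, Bform_single, FreeMonoid.toList_mul,
        cf_mul_right Bf p b2 r ν hone hmul hr (FreeMonoid.toList u) w (FreeMonoid.toList v),
        Finsupp.mul_sum]
      apply Finsupp.sum_congr
      intro pr _
      rw [map_smul, map_smul, smul_eq_mul, smul_eq_mul, Bform_single, Bform_single]
      ring

lemma Bform_mul_right (hone : b2 (1, 1) = 1)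
    (hmul : ∀ w1 w2 w1' w2', b2 (w1, w2) * b2 (w1', w2')
        = tw Bf p w2 w1' • b2 (w1 * w1', w2 * w2'))
    (hr : ∀ i, r (th i) = b2 (FreeMonoid.of i, 1) + b2 (1, FreeMonoid.of i))
    (x y' y'' : FF I) :
    Bform b2 r ν x (y' * y'')
      = (b2.repr (r x)).sum fun pr c =>
          c * Bform b2 r ν (ofW pr.1) y' * Bform b2 r ν (ofW pr.2) y'' := by
  induction x using MonoidAlgebra.induction_linear with
  | zero =>
    rw [map_zero, LinearMap.zero_apply, map_zero, map_zero, Finsupp.sum_zero_index]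
  | add f g hf hg =>
    rw [map_add, LinearMap.add_apply, hf, hg, map_add, map_add,
      Finsupp.sum_add_index' (fun pr => by rw [zero_mul, zero_mul])
        (fun pr c1 c2 => by ring)]
  | single w a =>
    rw [single_eq_smul_ofW w a,
      map_smul, LinearMap.smul_apply, smul_eq_mul, map_smul, map_smul,
      Finsupp.sum_smul_index' (fun pr => by rw [zero_mul, zero_mul]),
      Bform_mul_right_single Bf p b2 r ν hone hmul hr w y' y'', rho_def, Finsupp.mul_sum]
    apply Finsupp.sum_congr
    intro pr _
    rw [smul_eq_mul]
    ring

lemma Bform_mul_left (hone : b2 (1, 1) = 1)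
    (hmul : ∀ w1 w2 w1' w2', b2 (w1, w2) * b2 (w1', w2')
        = tw Bf p w2 w1' • b2 (w1 * w1', w2 * w2'))
    (hr : ∀ i, r (th i) = b2 (FreeMonoid.of i, 1) + b2 (1, FreeMonoid.of i))
    (hsymm : ∀ i j, Bf i j = Bf j i)
    (x x' y'' : FF I) :
    Bform b2 r ν (x * x') y''
      = (b2.repr (r y'')).sum fun pr c =>
          c * Bform b2 r ν x (ofW pr.1) * Bform b2 r ν x' (ofW pr.2) := by
  rw [Bform_symm Bf p b2 r ν hone hmul hr hsymm (x * x') y'',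
    Bform_mul_right Bf p b2 r ν hone hmul hr y'' x x']
  apply Finsupp.sum_congr
  intro pr _
  rw [Bform_symm Bf p b2 r ν hone hmul hr hsymm (ofW pr.1) x,
    Bform_symm Bf p b2 r ν hone hmul hr hsymm (ofW pr.2) x']

end BformSection

section UniqueSection
set_option linter.unusedSectionVars false
set_option maxHeartbeats 4000000
set_option synthInstance.maxHeartbeats 1000000

variable {I : Type} [DecidableEq I] (Bf : I → I → ℤ) (p : I → ℕ)
variable {T2 : Type} [Ring T2] [Algebra Aq T2]
variable (b2 : Module.Basis (FreeMonoid I × FreeMonoid I) Aq T2)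
variable (r : FF I →ₐ[Aq] T2)
variable (ν : I → Aq)
variable (B2 : FF I →ₗ[Aq] FF I →ₗ[Aq] Aq)

lemma u_repr_one (hone : b2 (1, 1) = 1) :
    b2.repr (r (1 : FF I)) = Finsupp.single ((1 : FreeMonoid I), (1 : FreeMonoid I)) 1 := by
  rw [← ofW_one (I := I)]
  exact rho_one b2 r hone

lemma uA (hone : b2 (1, 1) = 1)
    (hr : ∀ i, r (th i) = b2 (FreeMonoid.of i, 1) + b2 (1, FreeMonoid.of i))
    (h11 : B2 1 1 = 1)
    (hmr : ∀ x y' y'', B2 x (y' * y'') = (b2.repr (r x)).sum fun pr c =>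
      c * B2 (ofW pr.1) y' * B2 (ofW pr.2) y'')
    (i : I) : B2 (ofW (FreeMonoid.of i)) 1 = 0 := by
  have h := hmr (ofW (FreeMonoid.of i)) 1 1
  rw [mul_one] at h
  rw [show b2.repr (r (ofW (FreeMonoid.of i))) = rho b2 r (FreeMonoid.of i) from rfl,
    rho_of b2 r hr,
    Finsupp.sum_add_index' (fun pr => by rw [zero_mul, zero_mul])
      (fun pr c1 c2 => by ring),
    Finsupp.sum_single_index (by rw [zero_mul, zero_mul]),
    Finsupp.sum_single_index (by rw [zero_mul, zero_mul]), ofW_one, h11] at h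
  rw [one_mul, mul_one, one_mul, one_mul] at h
  have h2 : B2 (ofW (FreeMonoid.of i)) 1 + B2 (ofW (FreeMonoid.of i)) 1
      = B2 (ofW (FreeMonoid.of i)) 1 + 0 := by
    rw [add_zero]
    exact h.symm
  exact add_left_cancel h2

lemma uB (hone : b2 (1, 1) = 1)
    (hr : ∀ i, r (th i) = b2 (FreeMonoid.of i, 1) + b2 (1, FreeMonoid.of i))
    (h11 : B2 1 1 = 1)
    (hmr : ∀ x y' y'', B2 x (y' * y'') = (b2.repr (r x)).sum fun pr c =>
      c * B2 (ofW pr.1) y' * B2 (ofW pr.2) y'')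
    (hml : ∀ x x' y'', B2 (x * x') y'' = (b2.repr (r y'')).sum fun pr c =>
      c * B2 x (ofW pr.1) * B2 x' (ofW pr.2)) :
    ∀ w : FreeMonoid I, B2 (ofW w) 1 = if w = 1 then 1 else 0 := by
  intro w
  induction w using FreeMonoid.recOn with
  | one => rw [ofW_one, h11, if_pos rfl]
  | of_mul i w0 ihw =>
    have h := hml (ofW (FreeMonoid.of i)) (ofW w0) 1
    rw [u_repr_one b2 r hone,
      Finsupp.sum_single_index (by rw [zero_mul, zero_mul]), ofW_one] at h
    rw [ofW_mul, h, uA b2 r B2 hone hr h11 hmr i, if_neg (fm_of_mul_ne_one i w0)]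
    ring

lemma uC (hone : b2 (1, 1) = 1)
    (hr : ∀ i, r (th i) = b2 (FreeMonoid.of i, 1) + b2 (1, FreeMonoid.of i))
    (h11 : B2 1 1 = 1)
    (hgen : ∀ i j, B2 (ofW (FreeMonoid.of i)) (ofW (FreeMonoid.of j))
      = if i = j then ν i else 0)
    (hmr : ∀ x y' y'', B2 x (y' * y'') = (b2.repr (r x)).sum fun pr c =>
      c * B2 (ofW pr.1) y' * B2 (ofW pr.2) y'')
    (hml : ∀ x x' y'', B2 (x * x') y'' = (b2.repr (r y'')).sum fun pr c =>
      c * B2 x (ofW pr.1) * B2 x' (ofW pr.2))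
    (hsy : ∀ x y, B2 x y = B2 y x)
    (i : I) :
    ∀ u : FreeMonoid I, B2 (ofW u) (ofW (FreeMonoid.of i))
      = if u = FreeMonoid.of i then ν i else 0 := by
  intro u
  induction u using FreeMonoid.recOn with
  | one =>
    rw [ofW_one, hsy, uA b2 r B2 hone hr h11 hmr i,
      if_neg (fun h => fm_of_ne_one i h.symm)]
  | of_mul j u0 ihu =>
    have h := hml (ofW (FreeMonoid.of j)) (ofW u0) (ofW (FreeMonoid.of i))
    rw [show b2.repr (r (ofW (FreeMonoid.of i))) = rho b2 r (FreeMonoid.of i) from rfl,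
      rho_of b2 r hr,
      Finsupp.sum_add_index' (fun pr => by rw [zero_mul, zero_mul])
        (fun pr c1 c2 => by ring),
      Finsupp.sum_single_index (by rw [zero_mul, zero_mul]),
      Finsupp.sum_single_index (by rw [zero_mul, zero_mul]), ofW_one] at h
    rw [ofW_mul, h, hgen j i, uA b2 r B2 hone hr h11 hmr j,
      uB b2 r B2 hone hr h11 hmr hml u0]
    by_cases hij : j = i
    · subst hij
      rw [if_pos rfl]
      by_cases hu0 : u0 = 1
      · subst hu0
        rw [if_pos rfl, if_pos (mul_one (FreeMonoid.of j))]
        ring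
      · rw [if_neg hu0, if_neg (fun hh => by
          rcases fm_mul_eq_of.mp hh with ⟨_, h2⟩ | ⟨h1, _⟩
          · exact hu0 h2
          · exact fm_of_ne_one j h1)]
        ring
    · have hcond : (if FreeMonoid.of j * u0 = FreeMonoid.of i then ν i else 0) = 0 :=
        if_neg (fun hh => by
          rcases fm_mul_eq_of.mp hh with ⟨h1, _⟩ | ⟨h1, _⟩
          · exact hij (FreeMonoid.of_injective h1)
          · exact fm_of_ne_one j h1)
      rw [if_neg hij, hcond]
      ring

lemma uD (hone : b2 (1, 1) = 1)
    (hr : ∀ i, r (th i) = b2 (FreeMonoid.of i, 1) + b2 (1, FreeMonoid.of i))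
    (h11 : B2 1 1 = 1)
    (hgen : ∀ i j, B2 (ofW (FreeMonoid.of i)) (ofW (FreeMonoid.of j))
      = if i = j then ν i else 0)
    (hmr : ∀ x y' y'', B2 x (y' * y'') = (b2.repr (r x)).sum fun pr c =>
      c * B2 (ofW pr.1) y' * B2 (ofW pr.2) y'')
    (hml : ∀ x x' y'', B2 (x * x') y'' = (b2.repr (r y'')).sum fun pr c =>
      c * B2 x (ofW pr.1) * B2 x' (ofW pr.2))
    (hsy : ∀ x y, B2 x y = B2 y x) :
    ∀ (y : List I) (w : FreeMonoid I),
      B2 (ofW w) (ofW (FreeMonoid.ofList y)) = cf (rho b2 r) ν y w := by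
  intro y
  induction y with
  | nil =>
    intro w
    rw [show FreeMonoid.ofList ([] : List I) = 1 from rfl, ofW_one, cf_nil]
    exact uB b2 r B2 hone hr h11 hmr hml w
  | cons i y0 ih =>
    intro w
    rw [fm_ofList_cons, ofW_mul, hmr (ofW w) (ofW (FreeMonoid.of i)) (ofW (FreeMonoid.ofList y0)),
      show b2.repr (r (ofW w)) = rho b2 r w from rfl, cf_cons]
    apply Finsupp.sum_congr
    intro pr _
    rw [uC b2 r ν B2 hone hr h11 hgen hmr hml hsy i pr.1, ih pr.2]

end UniqueSection

set_option maxHeartbeats 4000000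
set_option synthInstance.maxHeartbeats 1000000

/-- Existence and uniqueness of the symmetric bilinear form on `'f` with `(1,1)=1`,
`(θ_i,θ_j) = δ_{ij}(1-π_i q_i^{-2})^{-1}`, `(x,y'y'') = (r(x), y'⊗y'')` and
`(xx',y'') = (x⊗x', r(y''))`. -/
theorem bilinear_form_exists_unique
    (I : Type) [DecidableEq I] (Bf : I → I → ℤ) (p d : I → ℕ) (aij : I → I → ℤ)
    (hSCD : SCD I Bf p d aij)
    (T2 : Type) [Ring T2] [Algebra Aq T2]
    (b2 : Module.Basis (FreeMonoid I × FreeMonoid I) Aq T2)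
    (hone : b2 (1, 1) = 1)
    (hmul : ∀ w1 w2 w1' w2', b2 (w1, w2) * b2 (w1', w2')
        = tw Bf p w2 w1' • b2 (w1 * w1', w2 * w2'))
    (r : FF I →ₐ[Aq] T2)
    (hr : ∀ i, r (th i) = b2 (FreeMonoid.of i, 1) + b2 (1, FreeMonoid.of i)) :
    ∃! B : FF I →ₗ[Aq] FF I →ₗ[Aq] Aq,
      FormProps I Bf p d T2 b2 r B ∧ ∀ x y, B x y = B y x := by
  have hsymm : ∀ i j, Bf i j = Bf j i := hSCD.symm
  refine ⟨Bform b2 r (fun i => (1 - pi' p i * qi d i ^ (-2 : ℤ))⁻¹), ⟨⟨?_, ?_, ?_, ?_⟩, ?_⟩, ?_⟩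
  · -- (1,1) = 1
    rw [show (1 : FF I) = ofW 1 from (ofW_one (I := I)).symm, Bform_single,
      FreeMonoid.toList_one, cf_nil, if_pos rfl]
  · -- generators
    intro i j
    show Bform b2 r _ (ofW (FreeMonoid.of i)) (ofW (FreeMonoid.of j)) = _
    rw [Bform_single, FreeMonoid.toList_of,
      cf_of b2 r (fun i => (1 - pi' p i * qi d i ^ (-2 : ℤ))⁻¹) hone hr [j] i]
    by_cases h : i = j
    · subst h
      rw [if_pos rfl, if_pos rfl]
    · rw [if_neg (fun hh => h ((List.cons.injEq ..).mp hh).1.symm), if_neg h]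
  · exact Bform_mul_right Bf p b2 r _ hone hmul hr
  · exact Bform_mul_left Bf p b2 r _ hone hmul hr hsymm
  · exact Bform_symm Bf p b2 r _ hone hmul hr hsymm
  · -- uniqueness
    rintro B2 ⟨hp, hsy⟩
    have hgen : ∀ i j, B2 (ofW (FreeMonoid.of i)) (ofW (FreeMonoid.of j))
        = if i = j then (1 - pi' p i * qi d i ^ (-2 : ℤ))⁻¹ else 0 := fun i j => hp.gen i j
    apply LinearMap.ext; intro x
    apply LinearMap.ext; intro y
    induction x using MonoidAlgebra.induction_linear with
    | zero => rw [map_zero, map_zero]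
    | add f g hf hg => rw [map_add, map_add, LinearMap.add_apply, LinearMap.add_apply, hf, hg]
    | single w a =>
      induction y using MonoidAlgebra.induction_linear with
      | zero => rw [map_zero, map_zero]
      | add f g hf hg => rw [map_add, map_add, hf, hg]
      | single w' b =>
        have happ : ∀ (B : FF I →ₗ[Aq] FF I →ₗ[Aq] Aq),
            B (a • ofW w) (b • ofW w') = a * (b * B (ofW w) (ofW w')) := by
          intro B
          rw [map_smul, map_smul, LinearMap.smul_apply, smul_eq_mul, smul_eq_mul]
          ring
        have core : B2 (ofW w) (ofW w')
            = Bform b2 r (fun i => (1 - pi' p i * qi d i ^ (-2 : ℤ))⁻¹) (ofW w) (ofW w') := by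
          rw [Bform_single]
          have h0 := uD b2 r (fun i => (1 - pi' p i * qi d i ^ (-2 : ℤ))⁻¹) B2 hone hr
            hp.one_one hgen hp.mul_right hp.mul_left hsy (FreeMonoid.toList w') w
          rw [FreeMonoid.ofList_toList] at h0
          exact h0
        rw [single_eq_smul_ofW, single_eq_smul_ofW, happ, happ, core]
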